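/- arXiv:1811.02993 — 6 statements merged into one kernel-verified Lean document; each statement's English description precedes it below -/
import Mathlib

section
/- Let Γ be a countable discrete group, λ its left regular representation on ℓ²(Γ), and let V ⊆ ℓ²(Γ) be a closed left-invariant subspace with orthogonal projection P. Let p = P δ_e ∈ ℓ²(Γ), where δ_e is the indicator of the identity. Then every f ∈ V satisfies f = Σ_{γ∈Γ} f(γ) λ(γ)p (convergence in ℓ²), and consequently V equals the closed linear span of {λ(γ)p : γ ∈ Γ}; i.e., every left-invariant subspace of ℓ²(Γ) is singly generated. -/
/-- If `V ⊆ ℓ²(Γ)` is a closed left-invariant subspace with orthogonal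
projection `P`, and `p = P δ_e`, then every `f ∈ V` satisfies `f = Σ_γ f(γ) λ(γ)p`
(convergence in `ℓ²`), and `V` is the closed linear span of `{λ(γ)p : γ ∈ Γ}`; in particular
every left-invariant subspace is principal (singly generated). -/
theorem stmt6 (Γ : Type*) [Group Γ] [Countable Γ] [DecidableEq Γ]
    (lam : Γ → (lp (fun _ : Γ => ℂ) 2 ≃ₗᵢ[ℂ] lp (fun _ : Γ => ℂ) 2))
    (hlam : ∀ (γ : Γ) (f : lp (fun _ : Γ => ℂ) 2) (γ' : Γ), lam γ f γ' = f (γ⁻¹ * γ'))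
    (V : Submodule ℂ (lp (fun _ : Γ => ℂ) 2))
    (hV : IsClosed (V : Set (lp (fun _ : Γ => ℂ) 2))) [CompleteSpace V]
    (hinv : ∀ γ : Γ, ∀ f ∈ V, lam γ f ∈ V)
    (p : lp (fun _ : Γ => ℂ) 2)
    (hp : p = (Submodule.orthogonalProjectionOnto V (lp.single 2 (1 : Γ) (1 : ℂ)) : lp (fun _ : Γ => ℂ) 2)) :
    (∀ f ∈ V, HasSum (fun γ : Γ => f γ • lam γ p) f) ∧
    V = (Submodule.span ℂ (Set.range fun γ : Γ => lam γ p)).topologicalClosure := by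
  classical
  -- symm of lam
  have hsymm : ∀ (γ : Γ) (v : lp (fun _ : Γ => ℂ) 2), (lam γ).symm v = lam γ⁻¹ v := by
    intro γ v
    apply (lam γ).injective
    rw [(lam γ).apply_symm_apply]
    apply lp.ext
    funext γ'
    rw [hlam, hlam]
    simp
  -- lam γ δ = single γ 1
  have hδγ : ∀ γ : Γ, lam γ (lp.single 2 (1 : Γ) (1 : ℂ)) = lp.single 2 γ (1 : ℂ) := by
    intro γ
    apply lp.ext
    funext γ'
    rw [hlam]
    by_cases h : γ' = γ
    · subst h
      simp [lp.single_apply_self]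
    · rw [lp.single_apply_ne 2 γ _ h, lp.single_apply_ne 2 (1 : Γ) _ ?_]
      intro hc
      exact h (by rw [← one_mul γ', ← mul_inv_cancel γ, mul_assoc, hc, mul_one])
  -- p ∈ V
  have hpV : p ∈ V := by rw [hp]; exact (Submodule.orthogonalProjectionOnto V _).2
  -- lam γ preserves V⊥
  have horth : ∀ (γ : Γ), ∀ w ∈ Vᗮ, lam γ w ∈ Vᗮ := by
    intro γ w hw
    rw [Submodule.mem_orthogonal]
    intro v hv
    have : (inner ℂ v (lam γ w) : ℂ) = inner ℂ ((lam γ).symm v) w := by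
      conv_lhs => rw [show v = lam γ ((lam γ).symm v) by simp]
      exact (lam γ).inner_map_map _ _
    rw [this, hsymm]
    exact hw _ (hinv γ⁻¹ v hv)
  -- the projection as a continuous linear map into H
  set Q := V.subtypeL.comp (Submodule.orthogonalProjectionOnto V) with hQ
  have hQmem : ∀ (x : lp (fun _ : Γ => ℂ) 2), x ∈ V → Q x = x := by
    intro x hx
    simp only [hQ, ContinuousLinearMap.comp_apply, Submodule.subtypeL_apply]
    exact Submodule.eq_starProjection_of_mem_orthogonal (K := V) hx (by simp)
  -- commutation on δ
  have hQδ : ∀ γ : Γ, Q (lam γ (lp.single 2 (1 : Γ) (1 : ℂ))) = lam γ p := by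
    intro γ
    simp only [hQ, ContinuousLinearMap.comp_apply, Submodule.subtypeL_apply]
    refine Submodule.eq_starProjection_of_mem_orthogonal (K := V) (hinv γ p hpV) ?_
    rw [show lam γ (lp.single 2 (1 : Γ) (1 : ℂ)) - lam γ p
        = lam γ (lp.single 2 (1 : Γ) (1 : ℂ) - p) by rw [map_sub]]
    refine horth γ _ ?_
    have := Submodule.sub_starProjection_mem_orthogonal (K := V) (lp.single 2 (1 : Γ) (1 : ℂ))
    rwa [Submodule.starProjection_apply, ← hp] at this
  -- the sum expansion for arbitrary f
  have hexp : ∀ f : lp (fun _ : Γ => ℂ) 2,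
      HasSum (fun γ : Γ => f γ • lam γ (lp.single 2 (1 : Γ) (1 : ℂ))) f := by
    intro f
    have h1 : HasSum (fun γ : Γ => lp.single 2 γ (f γ)) f :=
      lp.hasSum_single (by norm_num) f
    refine h1.congr_fun fun γ => ?_
    rw [hδγ γ, ← lp.single_smul, smul_eq_mul, mul_one]
  -- main HasSum claim
  have hmain : ∀ f ∈ V, HasSum (fun γ : Γ => f γ • lam γ p) f := by
    intro f hf
    have h2 := Q.hasSum (hexp f)
    rw [hQmem f hf] at h2
    refine h2.congr_fun fun γ => ?_
    rw [map_smul, hQδ γ]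
  refine ⟨hmain, le_antisymm ?_ ?_⟩
  · -- V ⊆ closure of span
    intro f hf
    have hs := hmain f hf
    refine mem_closure_of_tendsto hs ?_
    filter_upwards with s
    exact Submodule.sum_mem _ fun γ _ =>
      Submodule.smul_mem _ _ (Submodule.subset_span ⟨γ, rfl⟩)
  · refine Submodule.topologicalClosure_minimal _ ?_ hV
    rw [Submodule.span_le]
    rintro _ ⟨γ, rfl⟩
    exact hinv γ p hpV
end

section
/- Let Γ be a countable discrete group, λ its left regular representation, V ⊆ ℓ²(Γ) a closed left-invariant subspace with orthogonal projection P, and p = Pδ_e. Then the system {λ(γ)p}_{γ∈Γ} is a Parseval frame for V: for every f ∈ V, Σ_{γ∈Γ} |⟨f, λ(γ)p⟩|² = ‖f‖². -/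
open scoped InnerProductSpace ENNReal

/-- If `V ⊆ ℓ²(Γ)` is a closed left-invariant subspace with orthogonal
projection `P` and `p = P δ_e`, then `{λ(γ)p}_{γ∈Γ}` is a Parseval frame for `V`:
`Σ_γ |⟨f, λ(γ)p⟩|² = ‖f‖²` for all `f ∈ V`. -/
theorem stmt7 (Γ : Type*) [Group Γ] [Countable Γ] [DecidableEq Γ]
    (lam : Γ → (lp (fun _ : Γ => ℂ) 2 ≃ₗᵢ[ℂ] lp (fun _ : Γ => ℂ) 2))
    (hlam : ∀ (γ : Γ) (f : lp (fun _ : Γ => ℂ) 2) (γ' : Γ), lam γ f γ' = f (γ⁻¹ * γ'))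
    (V : Submodule ℂ (lp (fun _ : Γ => ℂ) 2))
    (hV : IsClosed (V : Set (lp (fun _ : Γ => ℂ) 2))) [CompleteSpace V]
    (hinv : ∀ γ : Γ, ∀ f ∈ V, lam γ f ∈ V)
    (p : lp (fun _ : Γ => ℂ) 2)
    (hp : p = (V.orthogonalProjectionOnto (lp.single 2 (1 : Γ) (1 : ℂ)) : lp (fun _ : Γ => ℂ) 2)) :
    ∀ f ∈ V, ∑' γ : Γ, ‖⟪f, lam γ p⟫_ℂ‖ ^ 2 = ‖f‖ ^ 2 := by
  intro f hf
  have key : ∀ γ : Γ, ‖⟪f, lam γ p⟫_ℂ‖ ^ 2 = ‖f γ‖ ^ 2 := by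
    intro γ
    set g := lam γ⁻¹ f with hg
    have hinvf : lam γ⁻¹ (lam γ p) = p := by
      ext γ'
      rw [hlam, hlam]
      simp
    have h1 : ⟪f, lam γ p⟫_ℂ = ⟪g, p⟫_ℂ := by
      rw [hg]
      exact (((lam γ⁻¹).inner_map_map f (lam γ p)).symm).trans (by rw [hinvf])
    have hgV : g ∈ V := hinv γ⁻¹ f hf
    have h2 : ⟪g, p⟫_ℂ = ⟪g, lp.single 2 (1 : Γ) (1 : ℂ)⟫_ℂ := by
      rw [hp]
      exact V.inner_orthogonalProjectionOnto_eq_of_mem_left ⟨g, hgV⟩ _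
    have h3 : ⟪g, lp.single 2 (1 : Γ) (1 : ℂ)⟫_ℂ = ⟪g (1 : Γ), (1 : ℂ)⟫_ℂ :=
      lp.inner_single_right _ _ _
    have h4 : g (1 : Γ) = f γ := by
      rw [hg, hlam]; simp
    rw [h1, h2, h3, h4]
    simp [RCLike.inner_apply, RCLike.norm_conj]
  rw [tsum_congr key]
  have h5 : ‖f‖ ^ (2 : ℕ) = ∑' γ : Γ, ‖f γ‖ ^ (2 : ℕ) := by
    have h := lp.norm_rpow_eq_tsum (p := 2) (by norm_num) f
    rw [show ((2 : ℝ≥0∞).toReal) = ((2 : ℕ) : ℝ) by norm_num] at h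
    simp only [Real.rpow_natCast] at h
    exact h
  exact h5.symm
end

section
/- Let Γ be a countable discrete group, γ₁ ≠ γ₂ ∈ Γ, a, b ∈ ℂ \ {0}, and f = a δ_{γ₁} + b δ_{γ₂} ∈ ℓ²(Γ). Suppose h = γ₁⁻¹γ₂ has infinite order (no n ≥ 1 with hⁿ = e). If g ∈ ℓ²(Γ) satisfies a̅ g(γγ₁) + b̅ g(γγ₂) = 0 for all γ ∈ Γ, then g = 0. -/
open scoped ComplexConjugate

/-- Two-pronged comb `f = a δ_{γ₁} + b δ_{γ₂}`, with `h = γ₁⁻¹γ₂` of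
infinite order: any `g ∈ ℓ²(Γ)` in the kernel of the adjoint of right convolution by `f`,
i.e. satisfying `conj a · g(γγ₁) + conj b · g(γγ₂) = 0` for all `γ`, is zero. -/
theorem stmt10 (Γ : Type*) [Group Γ] [Countable Γ]
    (γ₁ γ₂ : Γ) (hne : γ₁ ≠ γ₂)
    (a b : ℂ) (ha : a ≠ 0) (hb : b ≠ 0)
    (hord : ∀ n : ℕ, 1 ≤ n → (γ₁⁻¹ * γ₂) ^ n ≠ 1)
    (g : lp (fun _ : Γ => ℂ) 2)
    (hg : ∀ γ : Γ, conj a * g (γ * γ₁) + conj b * g (γ * γ₂) = 0) :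
    g = 0 := by
  by_contra hgz
  obtain ⟨γ₀, hγ₀⟩ : ∃ γ, g γ ≠ 0 := by
    by_contra hc; push_neg at hc
    exact hgz (by ext γ; simpa using hc γ)
  set h : Γ := γ₁⁻¹ * γ₂ with hh
  have hfin : ¬ IsOfFinOrder h := by
    rw [isOfFinOrder_iff_pow_eq_one]
    rintro ⟨n, hn, hn1⟩
    exact hord n hn hn1
  have hinj : Function.Injective fun n : ℤ => h ^ n :=
    injective_zpow_iff_not_isOfFinOrder.mpr hfin
  have hca : (conj a) ≠ 0 := by simpa using ha
  have hcb : (conj b) ≠ 0 := by simpa using hb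
  set r : ℂ := -(conj a) / conj b with hr
  have hr0 : r ≠ 0 := by
    simp [hr, div_eq_zero_iff, hca, hcb]
  have key : ∀ k : ℤ, g (γ₀ * h ^ (k + 1)) = r * g (γ₀ * h ^ k) := by
    intro k
    have H := hg (γ₀ * h ^ k * γ₁⁻¹)
    have e1 : γ₀ * h ^ k * γ₁⁻¹ * γ₁ = γ₀ * h ^ k := by group
    have e2 : γ₀ * h ^ k * γ₁⁻¹ * γ₂ = γ₀ * h ^ (k + 1) := by
      rw [zpow_add_one, hh]; group
    rw [e1, e2] at H
    apply mul_left_cancel₀ hcb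
    rw [hr]
    field_simp
    linear_combination H
  have hu : ∀ k : ℤ, g (γ₀ * h ^ k) = r ^ k * g γ₀ := by
    intro k
    induction k using Int.induction_on with
    | zero => simp
    | succ n ih =>
        rw [key n, ih, zpow_add_one₀ hr0]; ring
    | pred n ih =>
        apply mul_left_cancel₀ hr0
        rw [← key (-(n : ℤ) - 1), show (-(n : ℤ) - 1 + 1) = -(n : ℤ) by ring, ih,
          show (-(n : ℤ) - 1) = -(n : ℤ) + (-1) by ring, zpow_add₀ hr0, zpow_neg_one]
        field_simp
  have hnorm : ∀ k : ℤ, ‖g (γ₀ * h ^ k)‖ = ‖r‖ ^ k * ‖g γ₀‖ := by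
    intro k; rw [hu k, norm_mul, norm_zpow]
  have hrpos : 0 < ‖r‖ := norm_pos_iff.mpr hr0
  have contra : ∀ φ : ℕ → ℤ, Function.Injective φ → (∀ n, 1 ≤ ‖r‖ ^ (φ n)) → False := by
    intro φ hφ hφ1
    have hs : Summable fun γ => ‖g γ‖ ^ (2 : ℝ) := by
      have hm := lp.memℓp g
      have := hm.summable (p := 2) (by norm_num)
      simpa using this
    have hε : (0 : ℝ) < ‖g γ₀‖ ^ (2 : ℝ) :=
      Real.rpow_pos_of_pos (norm_pos_iff.mpr hγ₀) 2
    have hev : ∀ᶠ γ in Filter.cofinite, ‖g γ‖ ^ (2 : ℝ) < ‖g γ₀‖ ^ (2 : ℝ) :=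
      hs.tendsto_cofinite_zero.eventually (gt_mem_nhds hε)
    rw [Filter.eventually_cofinite] at hev
    refine Set.infinite_of_injective_forall_mem
      (f := fun n : ℕ => γ₀ * h ^ (φ n))
      (s := {γ : Γ | ¬ ‖g γ‖ ^ (2 : ℝ) < ‖g γ₀‖ ^ (2 : ℝ)}) ?_ ?_ hev
    · intro n m e
      exact hφ (hinj (mul_left_cancel e))
    · intro n
      simp only [Set.mem_setOf_eq, not_lt]
      rw [hnorm]
      apply Real.rpow_le_rpow (norm_nonneg _) _ (by norm_num)
      exact le_mul_of_one_le_left (norm_nonneg _) (hφ1 n)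
  rcases le_or_gt 1 ‖r‖ with hR | hR
  · refine contra (fun n => (n : ℤ)) (fun n m e => by simpa using e) fun n => ?_
    rw [zpow_natCast]
    exact one_le_pow₀ hR
  · refine contra (fun n => -(n : ℤ)) (fun n m e => by simpa using e) fun n => ?_
    rw [zpow_neg, zpow_natCast, one_le_inv_iff₀]
    exact ⟨pow_pos hrpos n, pow_le_one₀ hrpos.le hR.le⟩
end

section
/- Let G be a second countable LCA group with a compact open subgroup H, and fix a section C ⊆ Ĝ of Ĝ/H⊥, so that Ĝ is partitioned by the cosets {H⊥ + σ}_{σ∈C}. Then for f, g ∈ L²(G) and any [x] ∈ G/H, ⟨f, T_{[x]}g⟩ = ∫_{H⊥} (Σ_{σ∈C} f̂(η+σ) ĝ(η+σ)̄ ) η(x) dη, where T_{[x]} is the translation operator defined by (T_{[x]}f)^ = f̂ ω_{[x]} with ω_{[x]}(η+σ) = η(x)̄ for η ∈ H⊥, σ ∈ C; in particular the bracket [f,g](η) = Σ_{σ∈C} f̂(η+σ) ĝ(η+σ)̄ belongs to L¹(H⊥). -/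
open MeasureTheory
open scoped ComplexConjugate

/-- Number-theoretic setting, stated on the dual side (Plancherel is
assumed, so `f, g` stand for the Fourier transforms `f̂, ĝ` in `L²(Ĝ)`). Here `Gd = Ĝ` is a
second countable LCA group with Haar measure `μ`, `K = H⊥` is a compact open subgroup, and
`c : ι → Gd` enumerates a section `C` of `Ĝ/H⊥` (every `γ ∈ Ĝ` is uniquely `η + c i` with
`η ∈ K`). The character `χ = η ↦ η(x)` of `K` (extended as a character of `Gd`) and the
multiplier `ω = ω_{[x]}`, with `ω(η + c i) = conj (χ η)`, satisfy:
the bracket `η ↦ Σ_σ f̂(η+σ) conj(ĝ(η+σ))` is in `L¹(H⊥)`, and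
`⟨f, T_{[x]}g⟩ = ∫_Ĝ f̂ conj(ĝ ω) dμ = ∫_{H⊥} (Σ_σ f̂(η+σ) conj(ĝ(η+σ))) η(x) dμ(η)`. -/
theorem stmt14
    (Gd : Type*) [AddCommGroup Gd] [TopologicalSpace Gd] [IsTopologicalAddGroup Gd]
    [LocallyCompactSpace Gd] [SecondCountableTopology Gd]
    [MeasurableSpace Gd] [BorelSpace Gd]
    (μ : Measure Gd) [μ.IsAddHaarMeasure]
    (K : AddSubgroup Gd) (hKc : IsCompact (K : Set Gd)) (hKo : IsOpen (K : Set Gd))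
    (ι : Type*) [Countable ι] (c : ι → Gd)
    (hsec : ∀ γ : Gd, ∃! p : K × ι, (p.1 : Gd) + c p.2 = γ)
    (χ : Gd → ℂ) (hχcont : Continuous χ) (hχmul : ∀ x y : Gd, χ (x + y) = χ x * χ y)
    (hχnorm : ∀ x : Gd, ‖χ x‖ = 1)
    (ω : Gd → ℂ) (hω : ∀ (η : K) (i : ι), ω ((η : Gd) + c i) = conj (χ (η : Gd)))
    (f g : Gd → ℂ) (hf : MemLp f 2 μ) (hg : MemLp g 2 μ) :
    IntegrableOn (fun η : Gd => ∑' i : ι, f (η + c i) * conj (g (η + c i))) (K : Set Gd) μ ∧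
    ∫ γ : Gd, f γ * conj (g γ * ω γ) ∂μ
      = ∫ η in (K : Set Gd), (∑' i : ι, f (η + c i) * conj (g (η + c i))) * χ η ∂μ := by
  classical
  have hKm : MeasurableSet (K : Set Gd) := hKo.measurableSet
  have hmp : ∀ i : ι, MeasurePreserving (fun x : Gd => x + c i) μ μ :=
    fun i => measurePreserving_add_right μ (c i)
  have hemb : ∀ i : ι, MeasurableEmbedding (fun x : Gd => x + c i) :=
    fun i => (MeasurableEquiv.addRight (c i)).measurableEmbedding
  set F : Gd → ℂ := fun γ => f γ * conj (g γ) with hFdef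
  set A : ι → Set Gd := fun i => (fun x : Gd => x + c i) '' (K : Set Gd) with hAdef
  have hAm : ∀ i, MeasurableSet (A i) := fun i => (hemb i).measurableSet_image' hKm
  have hAdis : Pairwise (Function.onFun Disjoint A) := by
    intro i j hij
    refine Set.disjoint_left.2 ?_
    rintro γ ⟨η₁, hη₁, rfl⟩ ⟨η₂, hη₂, heq⟩
    obtain ⟨p, hp, hu⟩ := hsec (η₁ + c i)
    have h1 : p = (⟨η₁, hη₁⟩, i) := (hu _ rfl).symm
    have h2 : p = (⟨η₂, hη₂⟩, j) := (hu _ heq).symm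
    exact hij (congrArg Prod.snd (h1.symm.trans h2))
  have hAun : (⋃ i, A i) = Set.univ := by
    ext γ
    simp only [Set.mem_iUnion, Set.mem_univ, iff_true]
    obtain ⟨⟨η, i⟩, hp, -⟩ := hsec γ
    exact ⟨i, (η : Gd), η.2, hp⟩
  -- measurability and integrability of F
  have hgc : AEStronglyMeasurable (fun γ => conj (g γ)) μ :=
    Complex.continuous_conj.comp_aestronglyMeasurable hg.1
  have hFm : AEStronglyMeasurable F μ := hf.1.mul hgc
  have hgc2 : MemLp (fun γ => conj (g γ)) 2 μ :=
    MemLp.of_le hg hgc (Filter.Eventually.of_forall fun x => by simp)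
  have hFint : Integrable F μ := by
    rw [← memLp_one_iff_integrable]
    have := hgc2.smul (r := 1) hf
    exact this
  have hχnn : ∀ x : Gd, ‖χ x‖₊ = 1 := fun x => by
    ext
    simp [coe_nnnorm, hχnorm x]
  -- lintegral bookkeeping
  have hAESMci : ∀ i, AEStronglyMeasurable (fun η => F (η + c i)) μ := fun i =>
    hFm.comp_quasiMeasurePreserving (hmp i).quasiMeasurePreserving
  have hLi : ∀ i, ∫⁻ η in (K : Set Gd), ‖F (η + c i)‖₊ ∂μ = ∫⁻ γ in A i, ‖F γ‖₊ ∂μ :=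
    fun i => (hmp i).setLIntegral_comp_emb (hemb i) (fun γ => (‖F γ‖₊ : ENNReal)) K
  have hsumL : ∑' i, ∫⁻ γ in A i, ‖F γ‖₊ ∂μ = ∫⁻ γ, ‖F γ‖₊ ∂μ := by
    rw [← lintegral_iUnion hAm hAdis, hAun, Measure.restrict_univ]
  have hFfin : ∫⁻ γ, ‖F γ‖₊ ∂μ < ⊤ := hFint.2
  have hS : ∑' i, ∫⁻ η in (K : Set Gd), ‖F (η + c i)‖₊ ∂μ ≠ ⊤ := by
    rw [tsum_congr hLi, hsumL]; exact hFfin.ne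
  -- a.e. summability of the norms on K
  have hnnmeas : ∀ i, AEMeasurable (fun η => (‖F (η + c i)‖₊ : ENNReal)) (μ.restrict K) :=
    fun i => ((hAESMci i).restrict).nnnorm.aemeasurable.coe_nnreal_ennreal
  have haes : ∀ᵐ η ∂(μ.restrict (K : Set Gd)),
      Summable fun i => ‖F (η + c i)‖₊ := by
    have h1 : ∫⁻ η in (K : Set Gd), ∑' i, (‖F (η + c i)‖₊ : ENNReal) ∂μ ≠ ⊤ := by
      rw [lintegral_tsum hnnmeas]; exact hS
    filter_upwards [ae_lt_top' (AEMeasurable.ennreal_tsum hnnmeas) h1] with η hη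
    exact ENNReal.tsum_coe_ne_top_iff_summable.mp hη.ne
  have hsumm : ∀ᵐ η ∂(μ.restrict (K : Set Gd)),
      Summable fun i => F (η + c i) := by
    filter_upwards [haes] with η hη
    exact Summable.of_nnnorm hη
  -- the bracket and its measurability
  set B : Gd → ℂ := fun η => ∑' i, F (η + c i) with hBdef
  have hBm : AEStronglyMeasurable B (μ.restrict (K : Set Gd)) := by
    refine aestronglyMeasurable_of_tendsto_ae (Filter.atTop : Filter (Finset ι))
      (fun s => s.aestronglyMeasurable_sum fun i _ => (hAESMci i).restrict) ?_
    filter_upwards [hsumm] with η hη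
    simp only [Finset.sum_apply]
    exact hη.hasSum
  have hBint : IntegrableOn B (K : Set Gd) μ := by
    refine ⟨hBm, ?_⟩
    have hb : ∀ᵐ η ∂(μ.restrict (K : Set Gd)),
        (‖B η‖₊ : ENNReal) ≤ ∑' i, (‖F (η + c i)‖₊ : ENNReal) := by
      filter_upwards [haes] with η hη
      calc (‖B η‖₊ : ENNReal) ≤ ((∑' i, ‖F (η + c i)‖₊ : NNReal) : ENNReal) := by
            exact_mod_cast nnnorm_tsum_le hη
        _ = ∑' i, (‖F (η + c i)‖₊ : ENNReal) := ENNReal.coe_tsum hη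
    calc ∫⁻ η in (K : Set Gd), ‖B η‖₊ ∂μ
        ≤ ∫⁻ η in (K : Set Gd), ∑' i, (‖F (η + c i)‖₊ : ENNReal) ∂μ := lintegral_mono_ae hb
      _ = ∑' i, ∫⁻ η in (K : Set Gd), ‖F (η + c i)‖₊ ∂μ := lintegral_tsum hnnmeas
      _ < ⊤ := lt_top_iff_ne_top.2 hS
  refine ⟨hBint, ?_⟩
  -- the coset decomposition of the left-hand integrand
  set u : ι → Gd → ℂ := fun i => (A i).indicator (fun γ => F γ * χ (γ - c i)) with hudef
  have hupt : ∀ γ, f γ * conj (g γ * ω γ) = ∑' i, u i γ := by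
    intro γ
    obtain ⟨⟨η, i⟩, hp, hu⟩ := hsec γ
    have hγA : γ ∈ A i := ⟨(η : Gd), η.2, hp⟩
    rw [tsum_eq_single i ?hzero]
    case hzero =>
      intro j hj
      refine Set.indicator_of_notMem ?_ _
      rintro ⟨η', hη', h'⟩
      exact hj (congrArg Prod.snd (hu (⟨η', hη'⟩, j) h'))
    rw [hudef]
    simp only [Set.indicator_of_mem hγA]
    have hsub : γ - c i = (η : Gd) := by rw [← hp]; abel
    rw [hsub, ← hp, hω η i]
    simp only [hFdef, map_mul, RingHomCompTriple.comp_apply, Complex.conj_conj, mul_assoc, RingHom.id_apply]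
  have huAESM : ∀ i, AEStronglyMeasurable (u i) μ := fun i =>
    (hFm.mul ((hχcont.comp (continuous_id.sub continuous_const)).aestronglyMeasurable)).indicator
      (hAm i)
  have hunorm : ∀ i γ, (‖u i γ‖₊ : ENNReal) = (A i).indicator (fun γ => (‖F γ‖₊ : ENNReal)) γ := by
    intro i γ
    by_cases hγ : γ ∈ A i
    · simp only [hudef, Set.indicator_of_mem hγ, nnnorm_mul, hχnn, mul_one, ENNReal.coe_mul,
        ENNReal.coe_one]
    · simp [hudef, Set.indicator_of_notMem hγ]
  have hulint : ∀ i, ∫⁻ γ, ‖u i γ‖₊ ∂μ = ∫⁻ γ in A i, ‖F γ‖₊ ∂μ := by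
    intro i
    simp only [hunorm]
    exact lintegral_indicator (hAm i) _
  have huS : ∑' i, ∫⁻ γ, ‖u i γ‖₊ ∂μ ≠ ⊤ := by
    rw [tsum_congr hulint, hsumL]; exact hFfin.ne
  -- each piece transported to K
  have hui : ∀ i, ∫ γ, u i γ ∂μ = ∫ η in (K : Set Gd), F (η + c i) * χ η ∂μ := by
    intro i
    rw [hudef]
    rw [integral_indicator (hAm i)]
    have := (hmp i).setIntegral_image_emb (hemb i) (fun γ => F γ * χ (γ - c i)) K
    rw [hAdef]
    simp only at this ⊢
    rw [this]
    congr 1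
    ext η
    rw [add_sub_cancel_right]
  -- the right-hand side
  have hwAESM : ∀ i, AEStronglyMeasurable (fun η => F (η + c i) * χ η) (μ.restrict (K : Set Gd)) :=
    fun i => ((hAESMci i).mul hχcont.aestronglyMeasurable).restrict
  have hwS : ∑' i, ∫⁻ η in (K : Set Gd), ‖F (η + c i) * χ η‖₊ ∂μ ≠ ⊤ := by
    have : ∀ i, ∫⁻ η in (K : Set Gd), ‖F (η + c i) * χ η‖₊ ∂μ
        = ∫⁻ η in (K : Set Gd), ‖F (η + c i)‖₊ ∂μ := by
      intro i
      refine lintegral_congr fun η => ?_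
      simp [nnnorm_mul, hχnn]
    rw [tsum_congr this]; exact hS
  calc ∫ γ : Gd, f γ * conj (g γ * ω γ) ∂μ
      = ∫ γ : Gd, ∑' i, u i γ ∂μ := by
        exact integral_congr_ae (Filter.Eventually.of_forall hupt)
    _ = ∑' i, ∫ γ, u i γ ∂μ := integral_tsum huAESM huS
    _ = ∑' i, ∫ η in (K : Set Gd), F (η + c i) * χ η ∂μ := tsum_congr hui
    _ = ∫ η in (K : Set Gd), ∑' i, F (η + c i) * χ η ∂μ := (integral_tsum hwAESM hwS).symm
    _ = ∫ η in (K : Set Gd), (∑' i, f (η + c i) * conj (g (η + c i))) * χ η ∂μ := by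
        refine integral_congr_ae (Filter.Eventually.of_forall fun η => ?_)
        exact tsum_mul_right
end

section
/- Let G be a second countable LCA group with compact open subgroup H and C a section of Ĝ/H⊥. Then the map T : G/H → U(L²(G)), [x] ↦ T_{[x]}, defined via (T_{[x]}f)^ = f̂ ω_{[x]}, is a unitary representation of the discrete group G/H: each T_{[x]} is unitary, T_{[x]}T_{[y]} = T_{[x+y]}, and T_{[0]} is the identity. -/
open MeasureTheory

/-- Number-theoretic setting: `G` is a second countable LCA group with Haar
measure `ν` and compact open subgroup `H`. Since Plancherel's theorem for LCA groups is
assumed, the Fourier transform is given as a unitary `𝓕 : L²(G) ≅ L²(Ĝ)`, where the dual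
`Ĝ` is represented as a measure space `(Gd, μ)`. The multipliers `ω_{[x]}` (`[x] ∈ G/H`) are
unimodular, multiplicative in `[x]`, with `ω_{[0]} = 1`. Then `[x] ↦ T_{[x]}`, defined by
`(T_{[x]}f)^ = f̂ ω_{[x]}`, is a unitary representation of the discrete group `G/H` on
`L²(G)`: each `T_{[x]}` is unitary, `T_{[x]}T_{[y]} = T_{[x+y]}` and `T_{[0]} = id`
(this is the monoid-homomorphism property into the group of unitaries of `L²(G)`). -/
theorem stmt15
    (G : Type*) [AddCommGroup G] [TopologicalSpace G] [IsTopologicalAddGroup G]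
    [LocallyCompactSpace G] [SecondCountableTopology G]
    [MeasurableSpace G] [BorelSpace G]
    (ν : Measure G) [ν.IsAddHaarMeasure]
    (H : AddSubgroup G) (hHc : IsCompact (H : Set G)) (hHo : IsOpen (H : Set G))
    (Gd : Type*) [MeasurableSpace Gd] (μ : Measure Gd)
    (𝓕 : Lp ℂ 2 ν ≃ₗᵢ[ℂ] Lp ℂ 2 μ)
    (ω : G ⧸ H → Gd → ℂ)
    (hmeas : ∀ q : G ⧸ H, AEStronglyMeasurable (ω q) μ)
    (hnorm : ∀ (q : G ⧸ H) (γ : Gd), ‖ω q γ‖ = 1)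
    (hmul : ∀ (q r : G ⧸ H) (γ : Gd), ω (q + r) γ = ω q γ * ω r γ)
    (hzero : ∀ γ : Gd, ω 0 γ = 1) :
    ∃ T : Multiplicative (G ⧸ H) →* (Lp ℂ 2 ν ≃ₗᵢ[ℂ] Lp ℂ 2 ν),
      ∀ (q : G ⧸ H) (f : Lp ℂ 2 ν),
        (𝓕 (T (Multiplicative.ofAdd q) f) : Gd → ℂ)
          =ᵐ[μ] fun γ => ω q γ * (𝓕 f : Gd → ℂ) γ := by
  classical
  -- membership of pointwise products in L²
  have hmem : ∀ (q : G ⧸ H) (f : Lp ℂ 2 μ),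
      MemLp (fun γ => ω q γ * (f : Gd → ℂ) γ) 2 μ := by
    intro q f
    refine ⟨(hmeas q).mul (Lp.aestronglyMeasurable f), ?_⟩
    have he : eLpNorm (fun γ => ω q γ * (f : Gd → ℂ) γ) 2 μ
        = eLpNorm (f : Gd → ℂ) 2 μ := by
      apply eLpNorm_congr_norm_ae
      filter_upwards with γ
      simp [norm_mul, hnorm]
    rw [he]
    exact Lp.eLpNorm_lt_top f
  set Mf : (G ⧸ H) → Lp ℂ 2 μ → Lp ℂ 2 μ := fun q f => (hmem q f).toLp _ with hMf
  have hcoe : ∀ (q : G ⧸ H) (f : Lp ℂ 2 μ),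
      (Mf q f : Gd → ℂ) =ᵐ[μ] fun γ => ω q γ * (f : Gd → ℂ) γ := fun q f =>
    (hmem q f).coeFn_toLp
  -- composition law
  have hcomp : ∀ (q r : G ⧸ H) (f : Lp ℂ 2 μ), Mf q (Mf r f) = Mf (q + r) f := by
    intro q r f
    apply Lp.ext
    filter_upwards [hcoe q (Mf r f), hcoe (q + r) f, hcoe r f] with γ h1 h2 h3
    rw [h1, h3, h2, hmul, mul_assoc]
  -- identity
  have hid : ∀ f : Lp ℂ 2 μ, Mf 0 f = f := by
    intro f
    apply Lp.ext
    filter_upwards [hcoe 0 f] with γ h1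
    rw [h1, hzero, one_mul]
  -- additivity and smul
  have hadd : ∀ (q : G ⧸ H) (f g : Lp ℂ 2 μ), Mf q (f + g) = Mf q f + Mf q g := by
    intro q f g
    apply Lp.ext
    filter_upwards [hcoe q (f + g), hcoe q f, hcoe q g, Lp.coeFn_add f g,
      Lp.coeFn_add (Mf q f) (Mf q g)] with γ h1 h2 h3 h4 h5
    simp only [h1, h5, Pi.add_apply, h2, h3, h4, mul_add]
  have hsmul : ∀ (q : G ⧸ H) (c : ℂ) (f : Lp ℂ 2 μ), Mf q (c • f) = c • Mf q f := by
    intro q c f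
    apply Lp.ext
    filter_upwards [hcoe q (c • f), hcoe q f, Lp.coeFn_smul c f,
      Lp.coeFn_smul c (Mf q f)] with γ h1 h2 h3 h4
    simp only [h1, h4, Pi.smul_apply, h2, h3, smul_eq_mul]
    ring
  -- norm preservation
  have hnormM : ∀ (q : G ⧸ H) (f : Lp ℂ 2 μ), ‖Mf q f‖ = ‖f‖ := by
    intro q f
    rw [hMf]
    rw [Lp.norm_toLp]
    have he : eLpNorm (fun γ => ω q γ * (f : Gd → ℂ) γ) 2 μ
        = eLpNorm (f : Gd → ℂ) 2 μ := by
      apply eLpNorm_congr_norm_ae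
      filter_upwards with γ
      simp [norm_mul, hnorm]
    rw [he, Lp.norm_def]
  -- the multiplication operators as linear isometry equivs
  set M : (G ⧸ H) → (Lp ℂ 2 μ ≃ₗᵢ[ℂ] Lp ℂ 2 μ) := fun q =>
    { toFun := Mf q
      invFun := Mf (-q)
      map_add' := hadd q
      map_smul' := hsmul q
      left_inv := fun f => by show Mf (-q) (Mf q f) = f; rw [hcomp, neg_add_cancel, hid]
      right_inv := fun f => by show Mf q (Mf (-q) f) = f; rw [hcomp, add_neg_cancel, hid]
      norm_map' := hnormM q } with hM
  have hMapp : ∀ (q : G ⧸ H) (f : Lp ℂ 2 μ), M q f = Mf q f := fun _ _ => rfl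
  -- the representation
  refine ⟨MonoidHom.mk' (fun t => ((𝓕.trans (M t.toAdd)).trans 𝓕.symm)) ?_, ?_⟩
  · intro a b
    apply LinearIsometryEquiv.ext
    intro f
    have : M (a.toAdd + b.toAdd) (𝓕 f) = M a.toAdd (M b.toAdd (𝓕 f)) := by
      rw [hMapp, hMapp, hMapp, hcomp]
    simp only [LinearIsometryEquiv.coe_mul, Function.comp_apply,
      LinearIsometryEquiv.trans_apply, LinearIsometryEquiv.apply_symm_apply]
    have hab : Multiplicative.toAdd (a * b) = Multiplicative.toAdd a + Multiplicative.toAdd b := rfl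
    rw [hab, this]
  · intro q f
    simp only [MonoidHom.mk'_apply, LinearIsometryEquiv.trans_apply,
      LinearIsometryEquiv.apply_symm_apply]
    have : (Multiplicative.ofAdd q).toAdd = q := rfl
    rw [this, hMapp]
    exact hcoe q (𝓕 f)
end

section
/- Let Γ be a countable discrete group acting on a σ-finite measure space (X, μ) by a measure-preserving action σ that has the tiling property with tiling set C ⊆ X (the sets {σ_γ(C)}_{γ∈Γ} are pairwise μ-essentially disjoint and cover X up to null sets). Then the map Z : L²(X, μ) → L²(C, ℓ²(Γ)) defined by Z[φ](x) = (φ(σ_{γ⁻¹}(x)))_{γ∈Γ} for x ∈ C is an isometric isomorphism. -/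
set_option linter.unusedSectionVars false
set_option maxHeartbeats 1000000

open MeasureTheory Filter Set
open scoped ENNReal NNReal Topology

namespace Stmt19Aux

open Classical in
noncomputable def zfun {Γ : Type*} {X : Type*} (act : Γ → X → X) [Group Γ]
    (f : X → ℂ) (x : X) : lp (fun _ : Γ => ℂ) 2 :=
  if h : Memℓp (fun γ : Γ => f (act γ⁻¹ x)) 2 then ⟨_, h⟩ else 0

variable {Γ : Type*} [Group Γ] {X : Type*} {act : Γ → X → X} {f g : X → ℂ} {x : X}

lemma zfun_eq (h : Memℓp (fun γ : Γ => f (act γ⁻¹ x)) 2) :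
    zfun act f x = ⟨fun γ => f (act γ⁻¹ x), h⟩ := by
  unfold zfun
  exact dif_pos h

lemma zfun_apply (h : Memℓp (fun γ : Γ => f (act γ⁻¹ x)) 2) (γ : Γ) :
    (zfun act f x : Γ → ℂ) γ = f (act γ⁻¹ x) := by
  rw [zfun_eq h]

lemma zfun_congr_at (h : ∀ γ : Γ, f (act γ⁻¹ x) = g (act γ⁻¹ x)) :
    zfun act f x = zfun act g x := by
  have hfg : (fun γ : Γ => f (act γ⁻¹ x)) = fun γ : Γ => g (act γ⁻¹ x) := funext h
  have hP : Memℓp (fun γ : Γ => f (act γ⁻¹ x)) 2 = Memℓp (fun γ : Γ => g (act γ⁻¹ x)) 2 := by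
    rw [hfg]
  unfold zfun
  by_cases hp : Memℓp (fun γ : Γ => f (act γ⁻¹ x)) 2
  · rw [dif_pos hp, dif_pos (show Memℓp (fun γ : Γ => g (act γ⁻¹ x)) 2 from hP ▸ hp)]
    exact Subtype.ext hfg
  · rw [dif_neg hp, dif_neg (show ¬ Memℓp (fun γ : Γ => g (act γ⁻¹ x)) 2 from
      fun hq => hp (by rw [hP]; exact hq))]

lemma zfun_add_at (hf : Memℓp (fun γ : Γ => f (act γ⁻¹ x)) 2)
    (hg : Memℓp (fun γ : Γ => g (act γ⁻¹ x)) 2) :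
    zfun act (f + g) x = zfun act f x + zfun act g x := by
  have hfg : Memℓp (fun γ : Γ => (f + g) (act γ⁻¹ x)) 2 := hf.add hg
  rw [zfun_eq hf, zfun_eq hg, zfun_eq hfg]
  apply Subtype.ext
  have := lp.coeFn_add (⟨fun γ : Γ => f (act γ⁻¹ x), hf⟩ : lp (fun _ : Γ => ℂ) 2)
    (⟨fun γ : Γ => g (act γ⁻¹ x), hg⟩ : lp (fun _ : Γ => ℂ) 2)
  exact this

lemma zfun_smul_at (c : ℂ) (hf : Memℓp (fun γ : Γ => f (act γ⁻¹ x)) 2) :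
    zfun act (c • f) x = c • zfun act f x := by
  have hcf : Memℓp (fun γ : Γ => (c • f) (act γ⁻¹ x)) 2 := hf.const_smul c
  rw [zfun_eq hf, zfun_eq hcf]
  apply Subtype.ext
  have := lp.coeFn_smul c (⟨fun γ : Γ => f (act γ⁻¹ x), hf⟩ : lp (fun _ : Γ => ℂ) 2)
  exact this

lemma lp_enorm_sq {Γ : Type*} (ξ : lp (fun _ : Γ => ℂ) 2) :
    (‖ξ‖₊ : ℝ≥0∞) ^ (2:ℝ) = ∑' γ, (‖ξ γ‖₊ : ℝ≥0∞) ^ (2:ℝ) := by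
  have htr : (2:ℝ≥0∞).toReal = (2:ℝ) := by norm_num
  have hsum : Summable fun γ => ‖ξ γ‖ ^ (2:ℝ) := by
    have h1 := (lp.memℓp ξ).summable (p := 2) (by rw [htr]; norm_num)
    rwa [htr] at h1
  have hnorm : ‖ξ‖ ^ (2:ℝ) = ∑' γ, ‖ξ γ‖ ^ (2:ℝ) := by
    have h1 := lp.norm_rpow_eq_tsum (p := 2) (by rw [htr]; norm_num) ξ
    rwa [htr] at h1
  calc (‖ξ‖₊ : ℝ≥0∞) ^ (2:ℝ) = ENNReal.ofReal (‖ξ‖ ^ (2:ℝ)) := by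
        rw [← enorm_eq_nnnorm, ← ofReal_norm,
          ENNReal.ofReal_rpow_of_nonneg (norm_nonneg _) (by norm_num)]
    _ = ∑' γ, ENNReal.ofReal (‖ξ γ‖ ^ (2:ℝ)) := by
        rw [hnorm, ENNReal.ofReal_tsum_of_nonneg
          (fun γ => Real.rpow_nonneg (norm_nonneg _) _) hsum]
    _ = ∑' γ, (‖ξ γ‖₊ : ℝ≥0∞) ^ (2:ℝ) := by
        refine tsum_congr fun γ => ?_
        rw [← enorm_eq_nnnorm, ← ofReal_norm,
          ENNReal.ofReal_rpow_of_nonneg (norm_nonneg _) (by norm_num)]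

lemma memℓp_of_tsum_ne_top {Γ : Type*} (f : Γ → ℂ)
    (h : ∑' γ, (‖f γ‖₊ : ℝ≥0∞) ^ (2:ℝ) ≠ ∞) : Memℓp f 2 := by
  apply memℓp_gen
  have htr : (2:ℝ≥0∞).toReal = (2:ℝ) := by norm_num
  simp only [htr]
  have h2 := ENNReal.summable_toReal h
  refine h2.congr fun γ => ?_
  rw [← enorm_eq_nnnorm, ← ofReal_norm, ENNReal.ofReal_rpow_of_nonneg (norm_nonneg _) (by norm_num),
    ENNReal.toReal_ofReal (Real.rpow_nonneg (norm_nonneg _) _)]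

lemma eLpNorm_two_eq {α : Type*} [MeasurableSpace α] {ν : Measure α}
    {E' : Type*} [NormedAddCommGroup E'] (f : α → E') :
    eLpNorm f 2 ν = (∫⁻ x, (‖f x‖₊ : ℝ≥0∞) ^ (2:ℝ) ∂ν) ^ (1/2 : ℝ) := by
  rw [eLpNorm_eq_lintegral_rpow_enorm_toReal (p := 2) (by norm_num) (by norm_num)]
  norm_num
  rfl

lemma lintegral_sq_ne_top {α : Type*} [MeasurableSpace α] {ν : Measure α}
    {E' : Type*} [NormedAddCommGroup E'] {f : α → E'} (hf : MemLp f 2 ν) :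
    ∫⁻ x, (‖f x‖₊ : ℝ≥0∞) ^ (2:ℝ) ∂ν ≠ ∞ := by
  intro htop
  have h2 := hf.2
  rw [eLpNorm_two_eq, htop, ENNReal.top_rpow_of_pos (by norm_num)] at h2
  exact (lt_irrefl _) h2

lemma memℒp_of_lintegral_sq {α : Type*} [MeasurableSpace α] {ν : Measure α}
    {E' : Type*} [NormedAddCommGroup E'] {f : α → E'}
    (hm : AEStronglyMeasurable f ν)
    (h : ∫⁻ x, (‖f x‖₊ : ℝ≥0∞) ^ (2:ℝ) ∂ν ≠ ∞) : MemLp f 2 ν := by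
  refine ⟨hm, ?_⟩
  rw [eLpNorm_two_eq]
  exact ENNReal.rpow_lt_top_of_nonneg (by norm_num) h

end Stmt19Aux

namespace Stmt19Aux

variable {Γ : Type*} [Group Γ] [Countable Γ]
variable {X : Type*} [MeasurableSpace X] {μ : Measure X}
variable {act : Γ → X → X} {C : Set X}

section Basic

lemma act_inv_cancel (hact_mul : ∀ (γ γ' : Γ) (x : X), act γ (act γ' x) = act (γ * γ') x)
    (hact_one : ∀ x : X, act 1 x = x) (γ : Γ) (x : X) :
    act γ (act γ⁻¹ x) = x := by
  rw [hact_mul, mul_inv_cancel, hact_one]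

lemma act_inv_cancel' (hact_mul : ∀ (γ γ' : Γ) (x : X), act γ (act γ' x) = act (γ * γ') x)
    (hact_one : ∀ x : X, act 1 x = x) (γ : Γ) (x : X) :
    act γ⁻¹ (act γ x) = x := by
  rw [hact_mul, inv_mul_cancel, hact_one]

lemma img_eq_preimage (hact_mul : ∀ (γ γ' : Γ) (x : X), act γ (act γ' x) = act (γ * γ') x)
    (hact_one : ∀ x : X, act 1 x = x) (γ : Γ) (A : Set X) :
    act γ '' A = act γ⁻¹ ⁻¹' A := by
  ext x
  constructor
  · rintro ⟨a, ha, rfl⟩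
    simpa [mem_preimage, act_inv_cancel' hact_mul hact_one] using ha
  · intro hx
    exact ⟨act γ⁻¹ x, hx, act_inv_cancel hact_mul hact_one γ x⟩

lemma Ddisj (hact_mul : ∀ (γ γ' : Γ) (x : X), act γ (act γ' x) = act (γ * γ') x)
    (hact_one : ∀ x : X, act 1 x = x)
    (hdisj : ∀ γ₁ γ₂ : Γ, γ₁ ≠ γ₂ → μ (act γ₁ '' C ∩ act γ₂ '' C) = 0)
    {γ₁ γ₂ : Γ} (h : γ₁ ≠ γ₂) : μ (act γ₁ ⁻¹' C ∩ act γ₂ ⁻¹' C) = 0 := by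
  have h1 := img_eq_preimage hact_mul hact_one γ₁⁻¹ C
  have h2 := img_eq_preimage hact_mul hact_one γ₂⁻¹ C
  rw [inv_inv] at h1 h2
  rw [← h1, ← h2]
  exact hdisj γ₁⁻¹ γ₂⁻¹ (fun hq => h (inv_injective hq))

lemma Dcover (hact_mul : ∀ (γ γ' : Γ) (x : X), act γ (act γ' x) = act (γ * γ') x)
    (hact_one : ∀ x : X, act 1 x = x)
    (hcover : μ (Set.univ \ ⋃ γ : Γ, act γ '' C) = 0) :
    μ (Set.univ \ ⋃ γ : Γ, act γ ⁻¹' C) = 0 := by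
  have : (⋃ γ : Γ, act γ '' C) = ⋃ γ : Γ, act γ ⁻¹' C := by
    ext x
    simp only [mem_iUnion]
    constructor
    · rintro ⟨γ, hγ⟩
      rw [img_eq_preimage hact_mul hact_one] at hγ
      exact ⟨γ⁻¹, hγ⟩
    · rintro ⟨γ, hγ⟩
      refine ⟨γ⁻¹, ?_⟩
      rw [img_eq_preimage hact_mul hact_one, inv_inv]
      exact hγ
  rwa [this] at hcover

end Basic

section Integral

/-- Null set of pairwise intersections. -/
lemma Nnull (hdisjD : ∀ γ₁ γ₂ : Γ, γ₁ ≠ γ₂ → μ (act γ₁ ⁻¹' C ∩ act γ₂ ⁻¹' C) = 0) :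
    μ (⋃ (p : Γ × Γ) (_ : p.1 ≠ p.2), (act p.1 ⁻¹' C ∩ act p.2 ⁻¹' C)) = 0 := by
  refine measure_iUnion_null fun p => measure_iUnion_null fun h => hdisjD p.1 p.2 h

lemma tsum_setLIntegral_D (hactm : ∀ γ : Γ, Measurable (act γ)) (hC : MeasurableSet C)
    (hdisjD : ∀ γ₁ γ₂ : Γ, γ₁ ≠ γ₂ → μ (act γ₁ ⁻¹' C ∩ act γ₂ ⁻¹' C) = 0)
    (hcovD : μ (Set.univ \ ⋃ γ : Γ, act γ ⁻¹' C) = 0)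
    (g : X → ℝ≥0∞) :
    ∑' γ : Γ, ∫⁻ x in act γ ⁻¹' C, g x ∂μ = ∫⁻ x, g x ∂μ := by
  set N : Set X := ⋃ (p : Γ × Γ) (_ : p.1 ≠ p.2), (act p.1 ⁻¹' C ∩ act p.2 ⁻¹' C) with hN
  have hNnull : μ N = 0 := Nnull hdisjD
  have hNmeas : MeasurableSet N :=
    MeasurableSet.iUnion fun p => MeasurableSet.iUnion fun _ =>
      ((hactm p.1) hC).inter ((hactm p.2) hC)
  set A : Γ → Set X := fun γ => act γ ⁻¹' C \ N with hA
  have hAmeas : ∀ γ, MeasurableSet (A γ) := fun γ => ((hactm γ) hC).diff hNmeas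
  have hApair : Pairwise (Function.onFun Disjoint A) := by
    intro γ₁ γ₂ hne
    rw [Function.onFun, Set.disjoint_left]
    intro x hx1 hx2
    exact hx1.2 (mem_iUnion.2 ⟨(γ₁, γ₂), mem_iUnion.2 ⟨hne, hx1.1, hx2.1⟩⟩)
  have step1 : ∀ γ : Γ, ∫⁻ x in act γ ⁻¹' C, g x ∂μ = ∫⁻ x in A γ, g x ∂μ := by
    intro γ
    refine setLIntegral_congr ?_
    rw [ae_eq_set]
    constructor
    · refine measure_mono_null ?_ hNnull
      rintro x ⟨h1, h2⟩
      by_contra h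
      exact h2 ⟨h1, h⟩
    · exact measure_mono_null (fun x hx => (hx.2 hx.1.1).elim) measure_empty
  rw [tsum_congr step1, ← lintegral_iUnion hAmeas hApair g]
  have huniv : (⋃ γ, A γ) =ᵐ[μ] (Set.univ : Set X) := by
    rw [ae_eq_set]
    constructor
    · exact measure_mono_null (fun x hx => (hx.2 (mem_univ x)).elim) measure_empty
    · refine measure_mono_null ?_ (measure_union_null hcovD hNnull)
      rintro x ⟨-, hx⟩
      rw [mem_iUnion] at hx
      push_neg at hx
      by_cases hD : ∃ γ, x ∈ act γ ⁻¹' C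
      · obtain ⟨γ, hγ⟩ := hD
        rcases Classical.em (x ∈ N) with hN' | hN'
        · exact Or.inr hN'
        · exact absurd ⟨hγ, hN'⟩ (hx γ)
      · push_neg at hD
        exact Or.inl ⟨mem_univ x, by simpa using hD⟩
  rw [setLIntegral_congr huniv, Measure.restrict_univ]

end Integral

section Analysis

lemma setLIntegral_comp_inv (hactm : ∀ γ : Γ, Measurable (act γ))
    (hmp : ∀ γ : Γ, MeasurePreserving (act γ) μ μ)
    (hact_mul : ∀ (γ γ' : Γ) (x : X), act γ (act γ' x) = act (γ * γ') x)
    (hact_one : ∀ x : X, act 1 x = x) (hC : MeasurableSet C) (γ : Γ)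
    {g : X → ℝ≥0∞} (hg : Measurable g) :
    ∫⁻ x in C, g (act γ⁻¹ x) ∂μ = ∫⁻ x in act γ ⁻¹' C, g x ∂μ := by
  have hCeq : act γ⁻¹ ⁻¹' (act γ ⁻¹' C) = C := by
    ext x
    simp [mem_preimage, act_inv_cancel hact_mul hact_one]
  conv_lhs => rw [← hCeq]
  exact (hmp γ⁻¹).setLIntegral_comp_preimage ((hactm γ) hC) hg

lemma key_lintegral (hactm : ∀ γ : Γ, Measurable (act γ))
    (hmp : ∀ γ : Γ, MeasurePreserving (act γ) μ μ)
    (hact_mul : ∀ (γ γ' : Γ) (x : X), act γ (act γ' x) = act (γ * γ') x)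
    (hact_one : ∀ x : X, act 1 x = x) (hC : MeasurableSet C)
    (hdisj : ∀ γ₁ γ₂ : Γ, γ₁ ≠ γ₂ → μ (act γ₁ '' C ∩ act γ₂ '' C) = 0)
    (hcover : μ (Set.univ \ ⋃ γ : Γ, act γ '' C) = 0)
    {g : X → ℝ≥0∞} (hg : Measurable g) :
    ∫⁻ x in C, ∑' γ : Γ, g (act γ⁻¹ x) ∂μ = ∫⁻ x, g x ∂μ := by
  rw [lintegral_tsum (f := fun (γ : Γ) (x : X) => g (act γ⁻¹ x))
    fun γ => ((hg.comp (hactm γ⁻¹)).aemeasurable)]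
  calc ∑' γ : Γ, ∫⁻ x in C, g (act γ⁻¹ x) ∂μ
      = ∑' γ : Γ, ∫⁻ x in act γ ⁻¹' C, g x ∂μ :=
        tsum_congr fun γ => setLIntegral_comp_inv hactm hmp hact_mul hact_one hC γ hg
    _ = ∫⁻ x, g x ∂μ := tsum_setLIntegral_D hactm hC
        (fun γ₁ γ₂ h => Ddisj hact_mul hact_one hdisj h)
        (Dcover hact_mul hact_one hcover) g

lemma ae_memℓp (hactm : ∀ γ : Γ, Measurable (act γ))
    (hmp : ∀ γ : Γ, MeasurePreserving (act γ) μ μ)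
    (hact_mul : ∀ (γ γ' : Γ) (x : X), act γ (act γ' x) = act (γ * γ') x)
    (hact_one : ∀ x : X, act 1 x = x) (hC : MeasurableSet C)
    (hdisj : ∀ γ₁ γ₂ : Γ, γ₁ ≠ γ₂ → μ (act γ₁ '' C ∩ act γ₂ '' C) = 0)
    (hcover : μ (Set.univ \ ⋃ γ : Γ, act γ '' C) = 0)
    {f : X → ℂ} (hf : Measurable f)
    (hf2 : ∫⁻ x, (‖f x‖₊ : ℝ≥0∞) ^ (2:ℝ) ∂μ ≠ ∞) :
    ∀ᵐ x ∂(μ.restrict C), Memℓp (fun γ : Γ => f (act γ⁻¹ x)) 2 := by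
  have hgm : Measurable fun x => (‖f x‖₊ : ℝ≥0∞) ^ (2:ℝ) :=
    (ENNReal.continuous_rpow_const.measurable).comp hf.enorm
  have hSm : Measurable fun x => ∑' γ : Γ, (‖f (act γ⁻¹ x)‖₊ : ℝ≥0∞) ^ (2:ℝ) :=
    Measurable.ennreal_tsum fun γ => hgm.comp (hactm γ⁻¹)
  have hSint : ∫⁻ x, (∑' γ : Γ, (‖f (act γ⁻¹ x)‖₊ : ℝ≥0∞) ^ (2:ℝ)) ∂(μ.restrict C)
      = ∫⁻ x, (‖f x‖₊:ℝ≥0∞)^(2:ℝ) ∂μ :=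
    key_lintegral hactm hmp hact_mul hact_one hC hdisj hcover hgm
  have hfin := ae_lt_top hSm (by rw [hSint]; exact hf2)
  filter_upwards [hfin] with x hx
  exact memℓp_of_tsum_ne_top _ hx.ne

lemma aesm_zfun (hactm : ∀ γ : Γ, Measurable (act γ)) {f : X → ℂ} (hf : Measurable f)
    (hae : ∀ᵐ x ∂(μ.restrict C), Memℓp (fun γ : Γ => f (act γ⁻¹ x)) 2) :
    AEStronglyMeasurable (zfun act f) (μ.restrict C) := by
  classical
  set ψ : Finset Γ → X → lp (fun _ : Γ => ℂ) 2 :=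
    fun s x => ∑ γ ∈ s, lp.single 2 γ (f (act γ⁻¹ x)) with hψdef
  have hψ : ∀ s, StronglyMeasurable (ψ s) := by
    intro s
    refine Finset.stronglyMeasurable_fun_sum s fun γ _ => ?_
    have heq : (fun x => lp.single (E := fun _ : Γ => ℂ) 2 γ (f (act γ⁻¹ x)))
        = fun x => (f (act γ⁻¹ x)) • lp.single 2 γ (1:ℂ) := by
      funext x
      rw [← lp.single_smul]
      simp [smul_eq_mul]
    rw [heq]
    exact ((hf.comp (hactm γ⁻¹)).stronglyMeasurable).smul_const _
  refine aestronglyMeasurable_of_tendsto_ae atTop (fun s => (hψ s).aestronglyMeasurable) ?_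
  filter_upwards [hae] with x hx
  have h1 := lp.hasSum_single (E := fun _ : Γ => ℂ) (p := 2) (by norm_num) ⟨_, hx⟩
  rw [zfun_eq hx]
  exact h1

lemma eLpNorm_zfun (hactm : ∀ γ : Γ, Measurable (act γ))
    (hmp : ∀ γ : Γ, MeasurePreserving (act γ) μ μ)
    (hact_mul : ∀ (γ γ' : Γ) (x : X), act γ (act γ' x) = act (γ * γ') x)
    (hact_one : ∀ x : X, act 1 x = x) (hC : MeasurableSet C)
    (hdisj : ∀ γ₁ γ₂ : Γ, γ₁ ≠ γ₂ → μ (act γ₁ '' C ∩ act γ₂ '' C) = 0)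
    (hcover : μ (Set.univ \ ⋃ γ : Γ, act γ '' C) = 0)
    {f : X → ℂ} (hf : Measurable f)
    (hae : ∀ᵐ x ∂(μ.restrict C), Memℓp (fun γ : Γ => f (act γ⁻¹ x)) 2) :
    eLpNorm (zfun act f) 2 (μ.restrict C) = eLpNorm f 2 μ := by
  rw [eLpNorm_two_eq, eLpNorm_two_eq]
  congr 1
  have hpt : ∫⁻ x, (‖zfun act f x‖₊ : ℝ≥0∞) ^ (2:ℝ) ∂(μ.restrict C)
      = ∫⁻ x, ∑' γ : Γ, (‖f (act γ⁻¹ x)‖₊ : ℝ≥0∞) ^ (2:ℝ) ∂(μ.restrict C) := by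
    refine lintegral_congr_ae ?_
    filter_upwards [hae] with x hx
    rw [lp_enorm_sq]
    exact tsum_congr fun γ => by rw [zfun_apply hx]
  rw [hpt]
  exact key_lintegral hactm hmp hact_mul hact_one hC hdisj hcover
    ((ENNReal.continuous_rpow_const.measurable).comp hf.enorm)

end Analysis

section Surj

lemma exists_preimage (hactm : ∀ γ : Γ, Measurable (act γ))
    (hmp : ∀ γ : Γ, MeasurePreserving (act γ) μ μ)
    (hact_mul : ∀ (γ γ' : Γ) (x : X), act γ (act γ' x) = act (γ * γ') x)
    (hact_one : ∀ x : X, act 1 x = x) (hC : MeasurableSet C)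
    (hdisj : ∀ γ₁ γ₂ : Γ, γ₁ ≠ γ₂ → μ (act γ₁ '' C ∩ act γ₂ '' C) = 0)
    (hcover : μ (Set.univ \ ⋃ γ : Γ, act γ '' C) = 0)
    {F : X → lp (fun _ : Γ => ℂ) 2} (hFsm : StronglyMeasurable F)
    (hF2 : ∫⁻ x in C, (‖F x‖₊ : ℝ≥0∞) ^ (2:ℝ) ∂μ ≠ ∞) :
    ∃ f : X → ℂ, Measurable f ∧ (∫⁻ x, (‖f x‖₊ : ℝ≥0∞) ^ (2:ℝ) ∂μ ≠ ∞) ∧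
      (∀ᵐ x ∂(μ.restrict C), zfun act f x = F x) := by
  classical
  obtain ⟨fΓ, hfΓ⟩ := exists_surjective_nat Γ
  set Dn : ℕ → Set X := fun n => act (fΓ n) ⁻¹' C with hDn
  set Ad : ℕ → Set X := disjointed Dn with hAdDef
  have hAdm : ∀ n, MeasurableSet (Ad n) :=
    MeasurableSet.disjointed (fun n => (hactm _) hC)
  have hAdd : Pairwise (Function.onFun Disjoint Ad) := disjoint_disjointed Dn
  have hAdsub : ∀ n, Ad n ⊆ Dn n := fun n => disjointed_le Dn n
  -- coordinate evaluation is continuous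
  have hev : ∀ γ : Γ, Continuous fun ξ : lp (fun _ : Γ => ℂ) 2 => ξ γ := by
    intro γ
    have hL : LipschitzWith 1 (fun ξ : lp (fun _ : Γ => ℂ) 2 => ξ γ) := by
      refine LipschitzWith.of_dist_le_mul fun ξ η => ?_
      rw [NNReal.coe_one, one_mul, dist_eq_norm, dist_eq_norm]
      have h1 : ξ γ - η γ = (ξ - η) γ := by
        rw [lp.coeFn_sub]; rfl
      rw [h1]
      exact lp.norm_apply_le_norm (by norm_num) (ξ - η) γ
    exact hL.continuous
  set tFun : ℕ → X → ℂ := fun n x => F (act (fΓ n) x) (fΓ n) with htFun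
  have htsm : ∀ n, StronglyMeasurable (tFun n) := fun n =>
    (hev (fΓ n)).comp_stronglyMeasurable (hFsm.comp_measurable (hactm (fΓ n)))
  set f : X → ℂ := fun x => ∑' n, (Ad n).indicator (tFun n) x with hfDef
  have hptA : ∀ n x, x ∈ Ad n → f x = tFun n x := by
    intro n x hx
    have h0 : ∀ m, m ≠ n → (Ad m).indicator (tFun m) x = 0 := fun m hm =>
      Set.indicator_of_notMem (Set.disjoint_right.1 (hAdd hm) hx) _
    rw [hfDef]
    simp only
    rw [tsum_eq_single n h0, Set.indicator_of_mem hx]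
  have hpt0 : ∀ x, x ∉ (⋃ n, Ad n) → f x = 0 := by
    intro x hx
    have h0 : ∀ m, (Ad m).indicator (tFun m) x = 0 := fun m =>
      Set.indicator_of_notMem (fun h => hx (mem_iUnion.2 ⟨m, h⟩)) _
    rw [hfDef]
    simp only
    rw [tsum_congr h0, tsum_zero]
  have hfsm : StronglyMeasurable f := by
    refine stronglyMeasurable_of_tendsto (f := fun N x =>
        ∑ n ∈ Finset.range N, (Ad n).indicator (tFun n) x) atTop
      (fun N => ?_) ?_
    · exact Finset.stronglyMeasurable_fun_sum _ fun n _ => (htsm n).indicator (hAdm n)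
    · rw [tendsto_pi_nhds]
      intro x
      refine HasSum.tendsto_sum_nat ?_
      by_cases hx : x ∈ ⋃ n, Ad n
      · obtain ⟨n₀, hn₀⟩ := mem_iUnion.1 hx
        have h1 := hasSum_single (f := fun n => (Ad n).indicator (tFun n) x) n₀
          (fun m hm => Set.indicator_of_notMem (Set.disjoint_right.1 (hAdd hm) hn₀) _)
        rw [show f x = (Ad n₀).indicator (tFun n₀) x from by
          rw [hptA n₀ x hn₀, Set.indicator_of_mem hn₀]]
        exact h1
      · rw [hpt0 x hx]
        have h0 : (fun n => (Ad n).indicator (tFun n) x) = fun _ => (0:ℂ) := funext fun m =>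
          Set.indicator_of_notMem (fun h => hx (mem_iUnion.2 ⟨m, h⟩)) _
        rw [h0]
        exact hasSum_zero
  have hfm : Measurable f := hfsm.measurable
  -- the norm bound
  set e : Γ → X → ℝ≥0∞ := fun γ c => (‖F c γ‖₊ : ℝ≥0∞) ^ (2:ℝ) with heDef
  have hem : ∀ γ, Measurable (e γ) := fun γ =>
    (ENNReal.continuous_rpow_const.measurable).comp
      (((hev γ).comp_stronglyMeasurable hFsm).measurable.enorm)
  set t : ℕ → X → ℝ≥0∞ := fun n x =>
    (Ad n).indicator (fun y => e (fΓ n) (act (fΓ n) y)) x with htDef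
  have htm : ∀ n, Measurable (t n) := fun n =>
    (((hem _).comp (hactm _))).indicator (hAdm n)
  have hptnorm : ∀ x, (‖f x‖₊ : ℝ≥0∞) ^ (2:ℝ) = ∑' n, t n x := by
    intro x
    by_cases hx : x ∈ ⋃ n, Ad n
    · obtain ⟨n₀, hn₀⟩ := mem_iUnion.1 hx
      rw [hptA n₀ x hn₀, tsum_eq_single n₀ (fun m hm =>
        Set.indicator_of_notMem (Set.disjoint_right.1 (hAdd hm) hn₀) _)]
      rw [Set.indicator_of_mem hn₀]
    · rw [hpt0 x hx]
      have h0 : ∀ n, t n x = 0 := fun n =>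
        Set.indicator_of_notMem (fun h => hx (mem_iUnion.2 ⟨n, h⟩)) _
      rw [tsum_congr h0, tsum_zero]
      simp [ENNReal.zero_rpow_of_pos]
  set Bn : ℕ → Set X := fun n => act (fΓ n)⁻¹ ⁻¹' Ad n with hBnDef
  have hBnm : ∀ n, MeasurableSet (Bn n) := fun n => (hactm _) (hAdm n)
  have hBnC : ∀ n, Bn n ⊆ C := by
    intro n y hy
    have h1 : act (fΓ n)⁻¹ y ∈ Dn n := hAdsub n hy
    have h2 : act (fΓ n) (act (fΓ n)⁻¹ y) ∈ C := h1
    rwa [act_inv_cancel hact_mul hact_one] at h2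
  have hchg : ∀ n, ∫⁻ x, t n x ∂μ = ∫⁻ c in Bn n, e (fΓ n) c ∂μ := by
    intro n
    have h1 : ∫⁻ x, t n x ∂μ
        = ∫⁻ x in Ad n, e (fΓ n) (act (fΓ n) x) ∂μ := lintegral_indicator (hAdm n) _
    rw [h1]
    have hAeq : Ad n = act (fΓ n) ⁻¹' (Bn n) := by
      ext y
      simp [hBnDef, mem_preimage, act_inv_cancel' hact_mul hact_one]
    rw [hAeq]
    exact (hmp (fΓ n)).setLIntegral_comp_preimage (hBnm n) (hem _)
  have hbound : ∫⁻ x, (‖f x‖₊ : ℝ≥0∞) ^ (2:ℝ) ∂μ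
      ≤ ∫⁻ c in C, (‖F c‖₊ : ℝ≥0∞) ^ (2:ℝ) ∂μ := by
    have hpointwise : ∀ c, (∑' n, (Bn n).indicator (e (fΓ n)) c)
        ≤ C.indicator (fun c => ∑' γ : Γ, e γ c) c := by
      intro c
      by_cases hc : c ∈ C
      · rw [Set.indicator_of_mem hc]
        rw [← ENNReal.tsum_fiberwise (fun n => (Bn n).indicator (e (fΓ n)) c) fΓ]
        refine ENNReal.tsum_le_tsum fun γ => ?_
        by_cases hex : ∃ n : fΓ ⁻¹' {γ}, c ∈ Bn (n : ℕ)
        · obtain ⟨n₀, hn₀⟩ := hex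
          rw [tsum_eq_single n₀ ?_]
          · have hfn : fΓ (n₀ : ℕ) = γ := n₀.2
            rw [Set.indicator_of_mem hn₀, hfn]
          · intro m hm
            refine Set.indicator_of_notMem ?_ _
            intro hcm
            have hfm : fΓ (m : ℕ) = γ := m.2
            have hfn : fΓ (n₀ : ℕ) = γ := n₀.2
            have hmn : (m : ℕ) ≠ (n₀ : ℕ) := fun h => hm (Subtype.ext h)
            have hx1 : act γ⁻¹ c ∈ Ad (m : ℕ) := by
              have := hcm; rw [hBnDef] at this; simp only [mem_preimage] at this
              rwa [hfm] at this
            have hx2 : act γ⁻¹ c ∈ Ad (n₀ : ℕ) := by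
              have := hn₀; rw [hBnDef] at this; simp only [mem_preimage] at this
              rwa [hfn] at this
            exact (Set.disjoint_left.1 (hAdd hmn) hx1) hx2
        · push_neg at hex
          have h0 : ∀ n : fΓ ⁻¹' {γ}, (Bn (n:ℕ)).indicator (e (fΓ (n:ℕ))) c = 0 :=
            fun n => Set.indicator_of_notMem (hex n) _
          rw [tsum_congr h0, tsum_zero]
          exact zero_le
      · rw [Set.indicator_of_notMem hc]
        have h0 : ∀ n, (Bn n).indicator (e (fΓ n)) c = 0 := fun n =>
          Set.indicator_of_notMem (fun h => hc (hBnC n h)) _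
        rw [tsum_congr h0, tsum_zero]
    calc ∫⁻ x, (‖f x‖₊:ℝ≥0∞)^(2:ℝ) ∂μ = ∫⁻ x, ∑' n, t n x ∂μ := lintegral_congr hptnorm
      _ = ∑' n, ∫⁻ x, t n x ∂μ := lintegral_tsum (fun n => (htm n).aemeasurable)
      _ = ∑' n, ∫⁻ c in Bn n, e (fΓ n) c ∂μ := tsum_congr hchg
      _ = ∑' n, ∫⁻ c, (Bn n).indicator (e (fΓ n)) c ∂μ :=
          tsum_congr fun n => (lintegral_indicator (hBnm n) _).symm
      _ = ∫⁻ c, ∑' n, (Bn n).indicator (e (fΓ n)) c ∂μ :=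
          (lintegral_tsum (fun n => ((hem _).indicator (hBnm n)).aemeasurable)).symm
      _ ≤ ∫⁻ c, C.indicator (fun c => ∑' γ : Γ, e γ c) c ∂μ := lintegral_mono hpointwise
      _ = ∫⁻ c in C, ∑' γ : Γ, e γ c ∂μ :=
          lintegral_indicator hC _
      _ = ∫⁻ c in C, (‖F c‖₊:ℝ≥0∞)^(2:ℝ) ∂μ :=
          lintegral_congr fun c => (lp_enorm_sq (F c)).symm
  have hf2 : ∫⁻ x, (‖f x‖₊:ℝ≥0∞)^(2:ℝ) ∂μ ≠ ∞ := fun h => hF2 (top_le_iff.1 (h ▸ hbound))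
  -- the a.e. identity
  set Nx : Set X := ⋃ (p : Γ × Γ) (_ : p.1 ≠ p.2), (act p.1 ⁻¹' C ∩ act p.2 ⁻¹' C) with hNxDef
  have hNnull : μ Nx = 0 := Nnull (fun γ₁ γ₂ h => Ddisj hact_mul hact_one hdisj h)
  have hNmeas : MeasurableSet Nx :=
    MeasurableSet.iUnion fun p => MeasurableSet.iUnion fun _ =>
      ((hactm p.1) hC).inter ((hactm p.2) hC)
  set G : Set X := (⋃ n, Ad n) \ Nx with hGDef
  have hGm : MeasurableSet G := (MeasurableSet.iUnion hAdm).diff hNmeas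
  have hGc : μ Gᶜ = 0 := by
    have hcompl : Gᶜ = (⋃ n, Ad n)ᶜ ∪ Nx := by
      rw [hGDef, Set.diff_eq, Set.compl_inter, compl_compl]
    rw [hcompl]
    refine measure_union_null ?_ hNnull
    have hU : (⋃ n, Ad n) = ⋃ γ : Γ, act γ ⁻¹' C := by
      rw [hAdDef, iUnion_disjointed]
      ext x
      simp only [mem_iUnion]
      exact ⟨fun ⟨n, h⟩ => ⟨fΓ n, h⟩, fun ⟨γ, h⟩ => by
        obtain ⟨n, rfl⟩ := hfΓ γ; exact ⟨n, h⟩⟩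
    rw [hU]
    have hD := Dcover hact_mul hact_one hcover
    rwa [← Set.compl_eq_univ_diff] at hD
  have hclaim : ∀ x ∈ G, ∀ γ : Γ, act γ x ∈ C → f x = F (act γ x) γ := by
    intro x hx γ hγ
    obtain ⟨n₀, hn₀⟩ := mem_iUnion.1 hx.1
    have hγn : γ = fΓ n₀ := by
      by_contra hne
      exact hx.2 (mem_iUnion.2 ⟨(γ, fΓ n₀), mem_iUnion.2 ⟨hne, hγ, hAdsub n₀ hn₀⟩⟩)
    subst hγn
    exact hptA n₀ x hn₀
  have hGae : ∀ᵐ x ∂μ, ∀ γ : Γ, act γ⁻¹ x ∈ G := by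
    rw [ae_all_iff]
    intro γ
    have hpre : μ (act γ⁻¹ ⁻¹' Gᶜ) = 0 := by
      rw [(hmp γ⁻¹).measure_preimage hGm.compl.nullMeasurableSet]
      exact hGc
    rw [ae_iff]
    exact hpre
  have hfinal : ∀ᵐ x ∂(μ.restrict C), zfun act f x = F x := by
    filter_upwards [ae_restrict_mem hC, ae_restrict_of_ae hGae] with c hc hG'
    have hcoord : ∀ γ : Γ, f (act γ⁻¹ c) = F c γ := by
      intro γ
      have h1 : act γ (act γ⁻¹ c) ∈ C := by
        rw [act_inv_cancel hact_mul hact_one]; exact hc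
      have h2 := hclaim (act γ⁻¹ c) (hG' γ) γ h1
      rwa [act_inv_cancel hact_mul hact_one] at h2
    have hmem : Memℓp (fun γ : Γ => f (act γ⁻¹ c)) 2 := by
      have heq : (fun γ : Γ => f (act γ⁻¹ c)) = fun γ => F c γ := funext hcoord
      rw [heq]
      exact lp.memℓp (F c)
    rw [zfun_eq hmem]
    exact Subtype.ext (funext hcoord)
  exact ⟨f, hfm, hf2, hfinal⟩

end Surj

section Package

lemma ae_orbit_congr (hmp : ∀ γ : Γ, MeasurePreserving (act γ) μ μ)
    {f g : X → ℂ} (h : f =ᵐ[μ] g) :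
    ∀ᵐ x ∂μ, ∀ γ : Γ, f (act γ⁻¹ x) = g (act γ⁻¹ x) := by
  rw [ae_all_iff]
  intro γ
  have hnull : μ {y | ¬ f y = g y} = 0 := ae_iff.1 h
  have hq := (hmp γ⁻¹).quasiMeasurePreserving.preimage_null hnull
  rw [ae_iff]
  exact hq

lemma zfun_package (hactm : ∀ γ : Γ, Measurable (act γ))
    (hmp : ∀ γ : Γ, MeasurePreserving (act γ) μ μ)
    (hact_mul : ∀ (γ γ' : Γ) (x : X), act γ (act γ' x) = act (γ * γ') x)
    (hact_one : ∀ x : X, act 1 x = x) (hC : MeasurableSet C)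
    (hdisj : ∀ γ₁ γ₂ : Γ, γ₁ ≠ γ₂ → μ (act γ₁ '' C ∩ act γ₂ '' C) = 0)
    (hcover : μ (Set.univ \ ⋃ γ : Γ, act γ '' C) = 0)
    {f : X → ℂ} (hf : MemLp f 2 μ) :
    (∀ᵐ x ∂(μ.restrict C), Memℓp (fun γ : Γ => f (act γ⁻¹ x)) 2) ∧
    MemLp (zfun act f) 2 (μ.restrict C) ∧
    eLpNorm (zfun act f) 2 (μ.restrict C) = eLpNorm f 2 μ := by
  have hmeas := hf.1
  set g := hmeas.mk f with hgdef
  have hgm : Measurable g := hmeas.stronglyMeasurable_mk.measurable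
  have hfg : f =ᵐ[μ] g := hmeas.ae_eq_mk
  have hg2 : MemLp g 2 μ := hf.ae_eq hfg
  have hg2' : ∫⁻ x, (‖g x‖₊ : ℝ≥0∞) ^ (2:ℝ) ∂μ ≠ ∞ := lintegral_sq_ne_top hg2
  have horb : ∀ᵐ x ∂μ, ∀ γ : Γ, f (act γ⁻¹ x) = g (act γ⁻¹ x) := ae_orbit_congr hmp hfg
  have horbC : ∀ᵐ x ∂(μ.restrict C), ∀ γ : Γ, f (act γ⁻¹ x) = g (act γ⁻¹ x) :=
    ae_restrict_of_ae horb
  have hAg := ae_memℓp hactm hmp hact_mul hact_one hC hdisj hcover hgm hg2'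
  have hAf : ∀ᵐ x ∂(μ.restrict C), Memℓp (fun γ : Γ => f (act γ⁻¹ x)) 2 := by
    filter_upwards [hAg, horbC] with x h1 h2
    have heq : (fun γ : Γ => f (act γ⁻¹ x)) = fun γ => g (act γ⁻¹ x) := funext h2
    rw [heq]
    exact h1
  have hzcong : zfun act f =ᵐ[μ.restrict C] zfun act g := by
    filter_upwards [horbC] with x h2
    exact zfun_congr_at h2
  have hBg := aesm_zfun hactm hgm hAg
  have hB : AEStronglyMeasurable (zfun act f) (μ.restrict C) := hBg.congr hzcong.symm
  have hCg := eLpNorm_zfun hactm hmp hact_mul hact_one hC hdisj hcover hgm hAg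
  have hnorm : eLpNorm (zfun act f) 2 (μ.restrict C) = eLpNorm f 2 μ := by
    rw [eLpNorm_congr_ae hzcong, hCg, eLpNorm_congr_ae hfg]
  refine ⟨hAf, ⟨hB, ?_⟩, hnorm⟩
  rw [hnorm]
  exact hf.2

end Package

end Stmt19Aux

open Stmt19Aux in
/-- Let `σ = act` be a measurable measure-preserving action of a countable
discrete group `Γ` on a σ-finite measure space `(X, μ)` with the tiling property for a
measurable set `C` (the sets `σ_γ(C)` are pairwise essentially disjoint and cover `X` up to a
null set). Then the Zak transform `Z[φ](x) = (φ(σ_{γ⁻¹}(x)))_{γ∈Γ}`, `x ∈ C`, is an isometric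
isomorphism from `L²(X, μ)` onto `L²(C, ℓ²(Γ))`. -/
theorem stmt19 (Γ : Type*) [Group Γ] [Countable Γ]
    (X : Type*) [MeasurableSpace X] (μ : Measure X) [SigmaFinite μ]
    (act : Γ → X → X) (hactm : ∀ γ : Γ, Measurable (act γ))
    (hmp : ∀ γ : Γ, MeasurePreserving (act γ) μ μ)
    (hact_mul : ∀ (γ γ' : Γ) (x : X), act γ (act γ' x) = act (γ * γ') x)
    (hact_one : ∀ x : X, act 1 x = x)
    (C : Set X) (hC : MeasurableSet C)
    (hdisj : ∀ γ₁ γ₂ : Γ, γ₁ ≠ γ₂ → μ (act γ₁ '' C ∩ act γ₂ '' C) = 0)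
    (hcover : μ (Set.univ \ ⋃ γ : Γ, act γ '' C) = 0) :
    ∃ Z : Lp ℂ 2 μ ≃ₗᵢ[ℂ] Lp (lp (fun _ : Γ => ℂ) 2) 2 (μ.restrict C),
      ∀ (φ : Lp ℂ 2 μ) (γ : Γ),
        (fun x : X => (Z φ : X → lp (fun _ : Γ => ℂ) 2) x γ)
          =ᵐ[μ.restrict C] fun x => (φ : X → ℂ) (act γ⁻¹ x) := by
  classical
  have pkg : ∀ φ : Lp ℂ 2 μ,
      (∀ᵐ x ∂(μ.restrict C), Memℓp (fun γ : Γ => (φ : X → ℂ) (act γ⁻¹ x)) 2) ∧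
      MemLp (zfun act (φ : X → ℂ)) 2 (μ.restrict C) ∧
      eLpNorm (zfun act (φ : X → ℂ)) 2 (μ.restrict C) = eLpNorm (φ : X → ℂ) 2 μ :=
    fun φ => zfun_package hactm hmp hact_mul hact_one hC hdisj hcover (Lp.memLp φ)
  have hadd : ∀ φ ψ : Lp ℂ 2 μ,
      ((pkg (φ + ψ)).2.1).toLp (zfun act ((φ + ψ : Lp ℂ 2 μ) : X → ℂ))
        = ((pkg φ).2.1).toLp (zfun act (φ : X → ℂ))
          + ((pkg ψ).2.1).toLp (zfun act (ψ : X → ℂ)) := by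
    intro φ ψ
    rw [← MemLp.toLp_add]
    refine MemLp.toLp_congr _ _ ?_
    have hsum : ((φ + ψ : Lp ℂ 2 μ) : X → ℂ) =ᵐ[μ] (φ : X → ℂ) + (ψ : X → ℂ) :=
      Lp.coeFn_add φ ψ
    have horb := ae_restrict_of_ae (s := C) (ae_orbit_congr hmp hsum)
    filter_upwards [horb, (pkg φ).1, (pkg ψ).1] with x h1 h2 h3
    rw [zfun_congr_at h1, zfun_add_at h2 h3]
    rfl
  have hsmul : ∀ (c : ℂ) (φ : Lp ℂ 2 μ),
      ((pkg (c • φ)).2.1).toLp (zfun act ((c • φ : Lp ℂ 2 μ) : X → ℂ))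
        = c • ((pkg φ).2.1).toLp (zfun act (φ : X → ℂ)) := by
    intro c φ
    rw [← MemLp.toLp_const_smul]
    refine MemLp.toLp_congr _ _ ?_
    have hsm : ((c • φ : Lp ℂ 2 μ) : X → ℂ) =ᵐ[μ] c • (φ : X → ℂ) := Lp.coeFn_smul c φ
    have horb := ae_restrict_of_ae (s := C) (ae_orbit_congr hmp hsm)
    filter_upwards [horb, (pkg φ).1] with x h1 h2
    rw [zfun_congr_at h1, zfun_smul_at c h2]
    rfl
  let Zlm : Lp ℂ 2 μ →ₗ[ℂ] Lp (lp (fun _ : Γ => ℂ) 2) 2 (μ.restrict C) :=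
    { toFun := fun φ => ((pkg φ).2.1).toLp (zfun act (φ : X → ℂ))
      map_add' := hadd
      map_smul' := hsmul }
  have hnormmap : ∀ φ : Lp ℂ 2 μ, ‖Zlm φ‖ = ‖φ‖ := by
    intro φ
    show ‖((pkg φ).2.1).toLp (zfun act (φ : X → ℂ))‖ = ‖φ‖
    rw [Lp.norm_toLp, (pkg φ).2.2, Lp.norm_def]
  let Zli : Lp ℂ 2 μ →ₗᵢ[ℂ] Lp (lp (fun _ : Γ => ℂ) 2) 2 (μ.restrict C) := ⟨Zlm, hnormmap⟩
  have hsurj : Function.Surjective Zli := by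
    intro F
    have hFaesm := Lp.aestronglyMeasurable F
    set Fm := hFaesm.mk with hFmdef
    have hFsm : StronglyMeasurable Fm := hFaesm.stronglyMeasurable_mk
    have hFeq : (F : X → lp (fun _ : Γ => ℂ) 2) =ᵐ[μ.restrict C] Fm := hFaesm.ae_eq_mk
    have hFm2 : MemLp Fm 2 (μ.restrict C) := (Lp.memLp F).ae_eq hFeq
    have hF2 := lintegral_sq_ne_top hFm2
    obtain ⟨f, hfm, hf2, hid⟩ :=
      exists_preimage hactm hmp hact_mul hact_one hC hdisj hcover hFsm hF2
    have hfmem : MemLp f 2 μ := memℒp_of_lintegral_sq hfm.aestronglyMeasurable hf2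
    refine ⟨hfmem.toLp f, ?_⟩
    have hcoe : ((hfmem.toLp f : Lp ℂ 2 μ) : X → ℂ) =ᵐ[μ] f := MemLp.coeFn_toLp hfmem
    have horb := ae_restrict_of_ae (s := C) (ae_orbit_congr hmp hcoe)
    have hzeq : zfun act ((hfmem.toLp f : Lp ℂ 2 μ) : X → ℂ)
        =ᵐ[μ.restrict C] (F : X → lp (fun _ : Γ => ℂ) 2) := by
      filter_upwards [horb, hid, hFeq] with x h1 h2 h3
      rw [zfun_congr_at h1, h2, ← h3]
    show ((pkg _).2.1).toLp _ = F
    refine Lp.ext ?_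
    exact (MemLp.coeFn_toLp _).trans hzeq
  let Z := LinearIsometryEquiv.ofSurjective Zli hsurj
  refine ⟨Z, ?_⟩
  intro φ γ
  have hZeq : Z φ = Zli φ := congrFun (LinearIsometryEquiv.coe_ofSurjective Zli hsurj) φ
  have hZφ : (Z φ : X → lp (fun _ : Γ => ℂ) 2) =ᵐ[μ.restrict C]
      zfun act (φ : X → ℂ) := by
    rw [hZeq]
    exact MemLp.coeFn_toLp ((pkg φ).2.1)
  filter_upwards [hZφ, (pkg φ).1] with x hx hmem
  rw [hx]
  exact zfun_apply hmem γ
end
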